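/- Let n ≥ 1 and let Λ be a positive ℂ-linear map on n×n complex matrices that is moreover sub-unital, i.e., the identity matrix dominates Λ(I) in the Loewner order: I − Λ(I) is positive semidefinite. Define V := Σ_{i,j} E_{ij} ⊗ Λ(E_{ji}). Then for every separable state σ on ℂⁿ ⊗ ℂⁿ, the real number Tr(σ·V) satisfies 0 ≤ Tr(σ·V) ≤ 1. -/

import Mathlib

open Matrix Kronecker ComplexOrder

lemma psd_diag_nonneg {m : Type*} [Fintype m] [DecidableEq m]
    {A : Matrix m m ℂ} (hA : A.PosSemidef) (i : m) : 0 ≤ A i i := by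
  exact hA.diag_nonneg

lemma psd_trace_nonneg {m : Type*} [Fintype m] [DecidableEq m]
    {A : Matrix m m ℂ} (hA : A.PosSemidef) : 0 ≤ A.trace :=
  Finset.sum_nonneg fun i _ => psd_diag_nonneg hA i

open scoped MatrixOrder in
lemma psd_trace_mul_nonneg {m : Type*} [Fintype m] [DecidableEq m]
    {A B : Matrix m m ℂ} (hA : A.PosSemidef) (hB : B.PosSemidef) :
    0 ≤ (A * B).trace := by
  have h1 : A = CFC.sqrt A * CFC.sqrt A := (CFC.sqrt_mul_sqrt_self A hA.nonneg).symm
  have h2 : (A * B).trace = (CFC.sqrt A * B * CFC.sqrt A).trace := by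
    conv_lhs => rw [h1, mul_assoc]
    exact trace_mul_comm _ _
  have h3 : CFC.sqrt A = (CFC.sqrt A)ᴴ := ((CFC.sqrt_nonneg A).posSemidef.1).symm
  rw [h2]
  apply psd_trace_nonneg
  have := hB.mul_mul_conjTranspose_same (CFC.sqrt A)
  rwa [← h3] at this

lemma psd_one_sub {m : Type*} [Fintype m] [DecidableEq m]
    {A : Matrix m m ℂ} (hA : A.PosSemidef) (htr : A.trace = 1) :
    ((1 : Matrix m m ℂ) - A).PosSemidef := by
  have hspec := hA.1.spectral_theorem
  rw [Unitary.conjStarAlgAut_apply] at hspec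
  set U : Matrix m m ℂ := (hA.1.eigenvectorUnitary : Matrix m m ℂ) with hUdef
  have hU : U * star U = 1 := (Matrix.mem_unitaryGroup_iff).mp hA.1.eigenvectorUnitary.2
  have hU' : star U * U = 1 := (Matrix.mem_unitaryGroup_iff').mp hA.1.eigenvectorUnitary.2
  -- sum of eigenvalues = 1
  have htr2 : ∑ i, (hA.1.eigenvalues i : ℂ) = 1 := by
    have : A.trace = ∑ i, (hA.1.eigenvalues i : ℂ) := by
      conv_lhs => rw [hspec]
      rw [trace_mul_cycle, hU', one_mul, trace_diagonal]
      simp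
    rw [← this, htr]
  have hsum : ∑ i, hA.1.eigenvalues i = 1 := by
    have := htr2
    push_cast at this
    exact_mod_cast this
  have hle : ∀ i, hA.1.eigenvalues i ≤ 1 := by
    intro i
    rw [← hsum]
    exact Finset.single_le_sum (fun j _ => hA.eigenvalues_nonneg j) (Finset.mem_univ i)
  have hdiag : ((1 : Matrix m m ℂ) -
      Matrix.diagonal (RCLike.ofReal ∘ hA.1.eigenvalues)).PosSemidef := by
    rw [← Matrix.diagonal_one, Matrix.diagonal_sub]
    refine Matrix.posSemidef_diagonal_iff.mpr fun i => ?_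
    simp only [Pi.sub_apply, Function.comp_apply, Pi.one_apply]
    rw [Complex.le_def]
    constructor
    · simp [sub_nonneg, hle i]
    · simp
  have key : (1 : Matrix m m ℂ) - A =
      U * ((1 : Matrix m m ℂ) - Matrix.diagonal (RCLike.ofReal ∘ hA.1.eigenvalues)) * star U := by
    rw [Matrix.mul_sub, Matrix.sub_mul, mul_one, hU, ← hspec]
  rw [key]
  exact hdiag.mul_mul_conjTranspose_same U

lemma trace_mul_stdBasis {m : Type*} [Fintype m] [DecidableEq m]
    (A : Matrix m m ℂ) (i j : m) :
    (A * Matrix.single i j (1 : ℂ)).trace = A j i := by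
  simp [Matrix.trace, Matrix.diag, Matrix.mul_apply, Matrix.single, ite_and]

lemma kron_trace_eq (n : ℕ)
    (Λ : Matrix (Fin n) (Fin n) ℂ →ₗ[ℂ] Matrix (Fin n) (Fin n) ℂ)
    (A B : Matrix (Fin n) (Fin n) ℂ) :
    ((A ⊗ₖ B) * (∑ i : Fin n, ∑ j : Fin n,
        (Matrix.single i j (1 : ℂ)) ⊗ₖ (Λ (Matrix.single j i (1 : ℂ))))).trace
      = (B * Λ A).trace := by
  rw [Finset.mul_sum]
  simp_rw [Finset.mul_sum, ← Matrix.mul_kronecker_mul]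
  rw [Matrix.trace_sum]
  simp_rw [Matrix.trace_sum, Matrix.trace_kronecker, trace_mul_stdBasis]
  calc ∑ i : Fin n, ∑ j : Fin n, A j i * (B * Λ (Matrix.single j i 1)).trace
      = (B * Λ (∑ i : Fin n, ∑ j : Fin n, A j i • Matrix.single j i (1:ℂ))).trace := by
        rw [map_sum, Finset.mul_sum, Matrix.trace_sum]
        congr 1; ext i
        rw [map_sum, Finset.mul_sum, Matrix.trace_sum]
        congr 1; ext j
        rw [_root_.map_smul, Matrix.mul_smul, Matrix.trace_smul, smul_eq_mul]
    _ = (B * Λ A).trace := by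
        have hXA : (∑ i : Fin n, ∑ j : Fin n, A j i • Matrix.single j i (1:ℂ)) = A := by
          rw [Finset.sum_comm]
          conv_rhs => rw [Matrix.matrix_eq_sum_single A]
          refine Finset.sum_congr rfl fun j _ => Finset.sum_congr rfl fun i _ => ?_
          rw [Matrix.smul_single, smul_eq_mul, mul_one]
        rw [hXA]

/-- If `Λ` is a positive, sub-unital (`I − Λ(I)` positive semidefinite)
ℂ-linear map on `n×n` complex matrices and `V := Σ_{i,j} E_{ij} ⊗ Λ(E_{ji})`,
then for every separable state `σ` on `ℂⁿ ⊗ ℂⁿ`, `Tr(σ·V)` is a real number in `[0,1]`. -/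
theorem subunital_positive_witness_separable_bounds
    (n : ℕ) (hn : 1 ≤ n)
    (Λ : Matrix (Fin n) (Fin n) ℂ →ₗ[ℂ] Matrix (Fin n) (Fin n) ℂ)
    (hΛpos : ∀ A : Matrix (Fin n) (Fin n) ℂ, A.PosSemidef → (Λ A).PosSemidef)
    (hΛsub : ((1 : Matrix (Fin n) (Fin n) ℂ) - Λ 1).PosSemidef)
    (V : Matrix (Fin n × Fin n) (Fin n × Fin n) ℂ)
    (hV : V = ∑ i : Fin n, ∑ j : Fin n,
        (Matrix.single i j (1 : ℂ)) ⊗ₖ (Λ (Matrix.single j i (1 : ℂ))))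
    (K : Type) [Fintype K]
    (p : K → ℝ) (hp : ∀ k, 0 ≤ p k) (hpsum : ∑ k, p k = 1)
    (σ₁ σ₂ : K → Matrix (Fin n) (Fin n) ℂ)
    (h₁pos : ∀ k, (σ₁ k).PosSemidef) (h₁tr : ∀ k, (σ₁ k).trace = 1)
    (h₂pos : ∀ k, (σ₂ k).PosSemidef) (h₂tr : ∀ k, (σ₂ k).trace = 1)
    (σ : Matrix (Fin n × Fin n) (Fin n × Fin n) ℂ)
    (hσ : σ = ∑ k : K, (p k : ℂ) • ((σ₁ k) ⊗ₖ (σ₂ k))) :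
    (σ * V).trace.im = 0 ∧ 0 ≤ (σ * V).trace.re ∧ (σ * V).trace.re ≤ 1 := by
  -- per-component quantities
  set t : K → ℂ := fun k => ((σ₂ k) * Λ (σ₁ k)).trace with ht
  have ht0 : ∀ k, 0 ≤ t k := fun k =>
    psd_trace_mul_nonneg (h₂pos k) (hΛpos _ (h₁pos k))
  have ht1 : ∀ k, (t k).re ≤ 1 := by
    intro k
    have hpsd : ((1 : Matrix (Fin n) (Fin n) ℂ) - Λ (σ₁ k)).PosSemidef := by
      have h1 : ((1 : Matrix (Fin n) (Fin n) ℂ) - σ₁ k).PosSemidef :=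
        psd_one_sub (h₁pos k) (h₁tr k)
      have h2 := hΛpos _ h1
      rw [map_sub] at h2
      have := hΛsub.add h2
      have heq : (1 - Λ 1) + (Λ 1 - Λ (σ₁ k)) = 1 - Λ (σ₁ k) := sub_add_sub_cancel _ _ _
      rwa [heq] at this
    have h3 : 0 ≤ ((σ₂ k) * ((1 : Matrix (Fin n) (Fin n) ℂ) - Λ (σ₁ k))).trace :=
      psd_trace_mul_nonneg (h₂pos k) hpsd
    have h4 : ((σ₂ k) * ((1 : Matrix (Fin n) (Fin n) ℂ) - Λ (σ₁ k))).trace = 1 - t k := by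
      rw [Matrix.mul_sub, Matrix.trace_sub, mul_one, h₂tr k]
    rw [h4, Complex.le_def] at h3
    have := h3.1
    simp only [Complex.zero_re, Complex.sub_re, Complex.one_re] at this
    linarith
  have htim : ∀ k, (t k).im = 0 := by
    intro k
    have := (ht0 k)
    rw [Complex.le_def] at this
    simpa using this.2.symm
  have htre : ∀ k, 0 ≤ (t k).re := by
    intro k
    have := (ht0 k)
    rw [Complex.le_def] at this
    simpa using this.1
  -- total trace
  have hz : (σ * V).trace = ∑ k, (p k : ℂ) * t k := by
    rw [hσ, Finset.sum_mul, Matrix.trace_sum]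
    refine Finset.sum_congr rfl fun k _ => ?_
    rw [Matrix.smul_mul, Matrix.trace_smul, hV, kron_trace_eq, smul_eq_mul]
  have hre : (σ * V).trace.re = ∑ k, p k * (t k).re := by
    rw [hz, Complex.re_sum]
    refine Finset.sum_congr rfl fun k _ => ?_
    rw [Complex.mul_re, Complex.ofReal_re, Complex.ofReal_im]
    simp
  have him : (σ * V).trace.im = 0 := by
    rw [hz, Complex.im_sum]
    refine Finset.sum_eq_zero fun k _ => ?_
    rw [Complex.mul_im, Complex.ofReal_re, Complex.ofReal_im, htim k]
    simp
  refine ⟨him, ?_, ?_⟩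
  · rw [hre]
    exact Finset.sum_nonneg fun k _ => mul_nonneg (hp k) (htre k)
  · rw [hre, ← hpsum]
    exact Finset.sum_le_sum fun k _ => by
      have := mul_le_mul_of_nonneg_left (ht1 k) (hp k)
      simpa using this
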